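/- Fix an integer t ≥ 2 and let n ≥ 2. For every integer m in the range N_n < m < N_{n+1} one has R_t(m) < R_t(N_n), where R_t(x) := Ψ_t(x)/(x log log x). -/

import Mathlib

open Finset Filter

/-- Generalized Dedekind psi function `Ψ_t(n) = n ∏_{p ∣ n} (1 + 1/p + ⋯ + 1/p^(t-1))`. -/
noncomputable def Psi (t n : ℕ) : ℝ :=
  (n : ℝ) * ∏ p ∈ n.primeFactors, ∑ i ∈ Finset.range t, (1 : ℝ) / (p : ℝ) ^ i

/-- The primorial `N_n = ∏_{k=1}^n p_k`, the product of the first `n` primes. -/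
noncomputable def primorialAt (n : ℕ) : ℕ := ∏ k ∈ Finset.range n, Nat.nth Nat.Prime k

/-- The `n`-th prime `p_n` (so `nthPrime 1 = 2`). -/
noncomputable def nthPrime (n : ℕ) : ℕ := Nat.nth Nat.Prime (n - 1)

/-- The ratio `R_t(x) = Ψ_t(x) / (x log log x)`. -/
noncomputable def Rt (t n : ℕ) : ℝ := Psi t n / ((n : ℝ) * Real.log (Real.log n))

/-- The Riemann zeta value `ζ(t) = ∑_{n ≥ 1} n^{-t}` at an integer argument. -/
noncomputable def zetaNat (t : ℕ) : ℝ := ∑' k : ℕ, 1 / ((k : ℝ) + 1) ^ t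

-- auxiliary
lemma nth_le_of_mem_primes (S : Finset ℕ) (hS : ∀ p ∈ S, p.Prime)
    (j : ℕ) (hj : j < S.card) : Nat.nth Nat.Prime j ≤ S.orderEmbOfFin rfl ⟨j, hj⟩ := by
  set e := S.orderEmbOfFin rfl with he
  induction j with
  | zero =>
      have : (e ⟨0, hj⟩).Prime := hS _ (S.orderEmbOfFin_mem rfl _)
      simpa [Nat.nth_prime_zero_eq_two] using this.two_le
  | succ i ih =>
      have hp : (e ⟨i + 1, hj⟩).Prime := hS _ (S.orderEmbOfFin_mem rfl _)
      have hi : i < S.card := Nat.lt_of_succ_lt hj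
      have hlt : Nat.nth Nat.Prime i < e ⟨i + 1, hj⟩ :=
        lt_of_le_of_lt (ih hi) (e.strictMono (show (⟨i, hi⟩ : Fin S.card) < ⟨i + 1, hj⟩ from Nat.lt_succ_self i))
      rw [← Nat.nth_count hp] at hlt ⊢
      rw [Nat.nth_lt_nth Nat.infinite_setOf_prime] at hlt
      exact (Nat.nth_le_nth Nat.infinite_setOf_prime).2 hlt

lemma prod_fin_aux {M : Type*} [CommMonoid M] (S : Finset ℕ) (g : ℕ → M) :
    ∏ p ∈ S, g p = ∏ i : Fin S.card, g (S.orderEmbOfFin rfl i) := by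
  have himg : Finset.image (⇑(S.orderEmbOfFin rfl)) Finset.univ = S := by
    apply Finset.coe_injective
    rw [Finset.coe_image, Finset.coe_univ, Set.image_univ, Finset.range_orderEmbOfFin]
  have hpi : ∏ x ∈ Finset.image (⇑(S.orderEmbOfFin rfl)) Finset.univ, g x
      = ∏ i : Fin S.card, g (S.orderEmbOfFin rfl i) :=
    Finset.prod_image (fun a _ b _ h => (S.orderEmbOfFin rfl).injective h)
  rw [← hpi, himg]

lemma one_le_f (t p : ℕ) (ht : 1 ≤ t) :
    (1 : ℝ) ≤ ∑ i ∈ Finset.range t, (1 : ℝ) / (p : ℝ) ^ i := by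
  have h0 : (0 : ℕ) ∈ Finset.range t := Finset.mem_range.2 ht
  have := Finset.single_le_sum (f := fun i => (1 : ℝ) / (p : ℝ) ^ i)
    (fun i _ => by positivity) h0
  simpa using this

lemma f_anti (t a b : ℕ) (ha : 1 ≤ a) (hab : a ≤ b) :
    ∑ i ∈ Finset.range t, (1 : ℝ) / (b : ℝ) ^ i ≤
      ∑ i ∈ Finset.range t, (1 : ℝ) / (a : ℝ) ^ i := by
  refine Finset.sum_le_sum fun i _ => ?_
  have h1 : (0 : ℝ) < (a : ℝ) ^ i := by positivity
  exact one_div_le_one_div_of_le h1 (pow_le_pow_left₀ (by positivity) (by exact_mod_cast hab) i)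

lemma primorial_strictMono : StrictMono primorialAt := by
  apply strictMono_nat_of_lt_succ
  intro k
  have hpos : 0 < primorialAt k :=
    Finset.prod_pos fun i _ => (Nat.prime_nth_prime i).pos
  have h2 : 1 < Nat.nth Nat.Prime k := (Nat.prime_nth_prime k).one_lt
  calc primorialAt k < primorialAt k * Nat.nth Nat.Prime k :=
        (Nat.lt_mul_iff_one_lt_right hpos).2 h2
    _ = primorialAt (k + 1) := by
        rw [primorialAt, primorialAt, Finset.prod_range_succ]

lemma two_pow_le_primorial (n : ℕ) : 2 ^ n ≤ primorialAt n := by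
  calc 2 ^ n = ∏ _k ∈ Finset.range n, 2 := by simp
    _ ≤ ∏ k ∈ Finset.range n, Nat.nth Nat.Prime k :=
        Finset.prod_le_prod' fun i _ => (Nat.prime_nth_prime i).two_le
    _ = primorialAt n := rfl

lemma prod_f_le (t n : ℕ) (ht : 1 ≤ t) (S : Finset ℕ) (hS : ∀ p ∈ S, p.Prime)
    (hcard : S.card ≤ n) :
    ∏ p ∈ S, ∑ i ∈ Finset.range t, (1 : ℝ) / (p : ℝ) ^ i ≤
      ∏ k ∈ Finset.range n, ∑ i ∈ Finset.range t, (1 : ℝ) / (Nat.nth Nat.Prime k : ℝ) ^ i := by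
  set f : ℕ → ℝ := fun p => ∑ i ∈ Finset.range t, (1 : ℝ) / (p : ℝ) ^ i with hf
  calc ∏ p ∈ S, f p = ∏ i : Fin S.card, f (S.orderEmbOfFin rfl i) := prod_fin_aux S f
    _ ≤ ∏ i : Fin S.card, f (Nat.nth Nat.Prime i) := by
        refine Finset.prod_le_prod (fun i _ => le_trans zero_le_one (one_le_f t _ ht)) ?_
        intro i _
        exact f_anti t _ _ (Nat.prime_nth_prime i).one_lt.le (nth_le_of_mem_primes S hS i i.2)
    _ = ∏ k ∈ Finset.range S.card, f (Nat.nth Nat.Prime k) :=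
        Fin.prod_univ_eq_prod_range (fun k => f (Nat.nth Nat.Prime k)) S.card
    _ ≤ ∏ k ∈ Finset.range n, f (Nat.nth Nat.Prime k) := by
        rw [← Finset.prod_range_mul_prod_Ico (fun k => f (Nat.nth Nat.Prime k)) hcard]
        have h1 : (1 : ℝ) ≤ ∏ k ∈ Finset.Ico S.card n, f (Nat.nth Nat.Prime k) := by
          calc (1 : ℝ) = ∏ _k ∈ Finset.Ico S.card n, (1 : ℝ) := by simp
            _ ≤ _ := Finset.prod_le_prod (fun _ _ => zero_le_one)
                (fun k _ => one_le_f t _ ht)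
        have h0 : (0 : ℝ) ≤ ∏ k ∈ Finset.range S.card, f (Nat.nth Nat.Prime k) :=
          Finset.prod_nonneg fun k _ => le_trans zero_le_one (one_le_f t _ ht)
        exact le_mul_of_one_le_right h0 h1

lemma primorial_card_le_prod (S : Finset ℕ) (hS : ∀ p ∈ S, p.Prime) :
    primorialAt S.card ≤ ∏ p ∈ S, p := by
  have h1 := prod_fin_aux S (fun p => p)
  calc primorialAt S.card = ∏ k ∈ Finset.range S.card, Nat.nth Nat.Prime k := rfl
    _ = ∏ i : Fin S.card, Nat.nth Nat.Prime i :=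
        (Fin.prod_univ_eq_prod_range (fun k => Nat.nth Nat.Prime k) S.card).symm
    _ ≤ ∏ i : Fin S.card, S.orderEmbOfFin rfl i :=
        Finset.prod_le_prod' fun i _ => nth_le_of_mem_primes S hS i i.2
    _ = ∏ p ∈ S, p := h1.symm

lemma primeFactors_primorialAt (n : ℕ) :
    (primorialAt n).primeFactors = (Finset.range n).image (Nat.nth Nat.Prime) := by
  have hinj : Set.InjOn (Nat.nth Nat.Prime) (Finset.range n) :=
    fun a _ b _ h => Nat.nth_injective Nat.infinite_setOf_prime h
  have : primorialAt n = ∏ p ∈ (Finset.range n).image (Nat.nth Nat.Prime), p := by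
    rw [Finset.prod_image fun a ha b hb h => hinj ha hb h]; rfl
  rw [this, Nat.primeFactors_prod]
  intro p hp
  obtain ⟨k, _, rfl⟩ := Finset.mem_image.1 hp
  exact Nat.prime_nth_prime k

theorem Rt_lt_Rt_primorial (t n : ℕ) (ht : 2 ≤ t) (hn : 2 ≤ n)
    (m : ℕ) (hm1 : primorialAt n < m) (hm2 : m < primorialAt (n + 1)) :
    Rt t m < Rt t (primorialAt n) := by
  have ht1 : 1 ≤ t := le_trans one_le_two ht
  set N := primorialAt n with hNdef
  set f : ℕ → ℝ := fun p => ∑ i ∈ Finset.range t, (1 : ℝ) / (p : ℝ) ^ i with hfdef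
  have hN4 : 4 ≤ N := by
    calc 4 = 2 ^ 2 := rfl
      _ ≤ 2 ^ n := Nat.pow_le_pow_right (by norm_num) hn
      _ ≤ N := two_pow_le_primorial n
  have hm4 : 4 < m := lt_of_le_of_lt hN4 hm1
  have hm0 : 0 < m := by omega
  -- card bound
  have hcard : m.primeFactors.card ≤ n := by
    by_contra h
    push_neg at h
    have h1 : primorialAt (n + 1) ≤ primorialAt m.primeFactors.card :=
      primorial_strictMono.monotone h
    have h2 : primorialAt m.primeFactors.card ≤ ∏ p ∈ m.primeFactors, p :=
      primorial_card_le_prod _ fun p hp => Nat.prime_of_mem_primeFactors hp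
    have h3 : ∏ p ∈ m.primeFactors, p ≤ m :=
      Nat.le_of_dvd hm0 (Nat.prod_primeFactors_dvd m)
    omega
  -- numerator comparison
  have hnum : ∏ p ∈ m.primeFactors, f p ≤ ∏ k ∈ Finset.range n, f (Nat.nth Nat.Prime k) :=
    prod_f_le t n ht1 _ (fun p hp => Nat.prime_of_mem_primeFactors hp) hcard
  -- rewrite Rt
  have hRm : Rt t m = (∏ p ∈ m.primeFactors, f p) / Real.log (Real.log m) := by
    rw [Rt, Psi, mul_div_mul_left _ _ (by exact_mod_cast hm0.ne' : (m : ℝ) ≠ 0)]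
  have hRN : Rt t N = (∏ k ∈ Finset.range n, f (Nat.nth Nat.Prime k)) /
      Real.log (Real.log N) := by
    have hinj : ∀ a ∈ Finset.range n, ∀ b ∈ Finset.range n,
        Nat.nth Nat.Prime a = Nat.nth Nat.Prime b → a = b :=
      fun a _ b _ h => Nat.nth_injective Nat.infinite_setOf_prime h
    have hN0 : (N : ℝ) ≠ 0 := by
      have : 0 < N := by omega
      exact_mod_cast this.ne'
    rw [Rt, Psi, hNdef, primeFactors_primorialAt, Finset.prod_image hinj, ← hNdef,
      mul_div_mul_left _ _ hN0]
  -- denominators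
  have h4R : (4 : ℝ) ≤ (N : ℝ) := by exact_mod_cast hN4
  have hNR0 : (0 : ℝ) < (N : ℝ) := by linarith
  have hlogN : 1 < Real.log N := by
    rw [Real.lt_log_iff_exp_lt hNR0]
    calc Real.exp 1 < 2.7182818286 := Real.exp_one_lt_d9
      _ < 4 := by norm_num
      _ ≤ (N : ℝ) := h4R
  have hmR : (N : ℝ) < (m : ℝ) := by exact_mod_cast hm1
  have hlogm : Real.log N < Real.log m := Real.log_lt_log hNR0 hmR
  have hLN : 0 < Real.log (Real.log N) := Real.log_pos hlogN
  have hLm : Real.log (Real.log N) < Real.log (Real.log m) :=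
    Real.log_lt_log (by linarith) hlogm
  have hLmpos : 0 < Real.log (Real.log m) := hLN.trans hLm
  have hPNpos : 0 < ∏ k ∈ Finset.range n, f (Nat.nth Nat.Prime k) :=
    Finset.prod_pos fun k _ => lt_of_lt_of_le zero_lt_one (one_le_f t _ ht1)
  rw [hRm, hRN]
  calc (∏ p ∈ m.primeFactors, f p) / Real.log (Real.log m)
      ≤ (∏ k ∈ Finset.range n, f (Nat.nth Nat.Prime k)) / Real.log (Real.log m) :=
        (div_le_div_iff_of_pos_right hLmpos).2 hnum
    _ < (∏ k ∈ Finset.range n, f (Nat.nth Nat.Prime k)) / Real.log (Real.log N) :=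
        div_lt_div_of_pos_left hPNpos hLN hLm
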